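/- Let f : X → 𝒢(Z,C) be a convex function and x₀ ∈ dom f. Then x₀ solves the strict scalarized Stampacchia inequality (svi_I): for all x ∈ X and all z* ∈ C⁻∖{0}, φ_{f,z*}(x₀) = −∞ or 0 ≤ φ′_{f,z*}(x₀, x−x₀), if and only if f(x₀) = cl co ⋃_{x∈X} f(x). -/

import Mathlib

open Set Pointwise

noncomputable section

variable {Z : Type*} [AddCommGroup Z] [Module ℝ Z] [TopologicalSpace Z]

/-- The inf-residual `A ⊖ B = {z : B + {z} ⊆ A}`. -/
def resid (A B : Set Z) : Set Z := {z : Z | B + {z} ⊆ A}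

/-- The recession cone `0⁺A`, with the convention `0⁺∅ = ∅`. -/
def recCone (A : Set Z) : Set Z := {z : Z | A.Nonempty ∧ A + {z} ⊆ A}

/-- `A ⊕ B = cl (A + B)`. -/
def oplus (A B : Set Z) : Set Z := closure (A + B)

/-- Membership in `𝒢(Z,C)`: `A = cl co (A + C)`. -/
def IsG (C A : Set Z) : Prop := A = closure (convexHull ℝ (A + C))

/-- The set `C⁻ \ {0}` of nonzero elements of the negative dual cone. -/
def negDualNZ (C : Set Z) : Set (Z →L[ℝ] ℝ) :=
  {p : Z →L[ℝ] ℝ | (∀ c ∈ C, p c ≤ 0) ∧ p ≠ 0}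

/-- `inf {-z*(z) : z ∈ A}` as an extended real. -/
def scal (p : Z →L[ℝ] ℝ) (A : Set Z) : EReal :=
  sInf ((fun z => ((-(p z) : ℝ) : EReal)) '' A)

/-- Support function `σ(z*|A) = sup {z*(z) : z ∈ A}` as an extended real. -/
def suppF (p : Z →L[ℝ] ℝ) (A : Set Z) : EReal :=
  sSup ((fun z => ((p z : ℝ) : EReal)) '' A)

/-- Inf-residuation on the extended reals: `r ⊖ s = inf {t ∈ ℝ : r ≤ s + t}`. -/
def eresid (r s : EReal) : EReal :=
  sInf ((fun t : ℝ => (t : EReal)) '' {t : ℝ | r ≤ s + (t : EReal)})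

variable {X : Type*} [AddCommGroup X] [Module ℝ X]

/-- The scalarization `φ_{f,z*}(x) = inf {-z*(z) : z ∈ f(x)}`. -/
def phi (f : X → Set Z) (p : Z →L[ℝ] ℝ) (x : X) : EReal := scal p (f x)

/-- Convexity for set-valued functions:
`f(t x₁ + (1-t) x₂) ⊇ cl (t f(x₁) + (1-t) f(x₂))`. -/
def ConvexSV (f : X → Set Z) : Prop :=
  ∀ x₁ x₂ : X, ∀ t : ℝ, t ∈ Ioo (0:ℝ) 1 →
    closure (t • f x₁ + (1 - t) • f x₂) ⊆ f (t • x₁ + (1 - t) • x₂)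

/-- The set-valued directional derivative
`f′(x,u) = ⋂_{t₀>0} cl co ⋃_{0<t<t₀} (1/t)•(f(x+tu) ⊖ f(x))`. -/
def sder (f : X → Set Z) (x u : X) : Set Z :=
  ⋂ t₀ ∈ Ioi (0:ℝ), closure (convexHull ℝ
    (⋃ t ∈ Ioo (0:ℝ) t₀, (1 / t) • resid (f (x + t • u)) (f x)))

/-- The scalar Dini derivative `φ′_{f,z*}(x,u) = inf_{t>0} (1/t)(φ(x+tu) ⊖ φ(x))`. -/
def phiDer (f : X → Set Z) (p : Z →L[ℝ] ℝ) (x u : X) : EReal :=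
  ⨅ t ∈ Ioi (0:ℝ), (((1 / t : ℝ)) : EReal) * eresid (phi f p (x + t • u)) (phi f p x)

end


section Aux

lemma eresid_nonneg_of_le {a : ℝ} {r : EReal} (h : (a : EReal) ≤ r) :
    (0 : EReal) ≤ eresid r (a : EReal) := by
  apply le_sInf
  rintro _ ⟨t, ht, rfl⟩
  have ht' : (a : EReal) ≤ ((a + t : ℝ) : EReal) := by
    rw [EReal.coe_add]; exact le_trans h ht
  rw [EReal.coe_le_coe_iff] at ht'
  show (0:EReal) ≤ (t:EReal)
  exact EReal.coe_le_coe_iff.mpr (by linarith)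

lemma le_of_eresid_nonneg {a : ℝ} {r : EReal} (h : (0 : EReal) ≤ eresid r (a : EReal)) :
    (a : EReal) ≤ r := by
  by_contra hc
  push_neg at hc
  have key : ∀ t : ℝ, r ≤ (a : EReal) + (t : EReal) → (0:EReal) ≤ (t : EReal) := by
    intro t ht
    exact le_trans h (sInf_le ⟨t, ht, rfl⟩)
  induction r using EReal.rec with
  | bot =>
    have h1 : (0:EReal) ≤ ((-1:ℝ):EReal) := key (-1) bot_le
    rw [← EReal.coe_zero, EReal.coe_le_coe_iff] at h1
    linarith
  | coe b =>
    have hba : b < a := EReal.coe_lt_coe_iff.mp hc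
    have := key (b - a) (by rw [← EReal.coe_add]; exact EReal.coe_le_coe_iff.mpr (by linarith))
    rw [← EReal.coe_zero, EReal.coe_le_coe_iff] at this
    linarith
  | top => exact absurd hc (by simp)

end Aux

theorem stmt_11
  {Z : Type*} [AddCommGroup Z] [Module ℝ Z] [TopologicalSpace Z]
  [IsTopologicalAddGroup Z] [ContinuousSMul ℝ Z] [LocallyConvexSpace ℝ Z] [T2Space Z]
  {X : Type*} [AddCommGroup X] [Module ℝ X]
  (C : Set Z) (hCclosed : IsClosed C) (hCconv : Convex ℝ C)
  (hCcone : ∀ c ∈ C, ∀ r : ℝ, 0 < r → r • c ∈ C) (hC0 : (0:Z) ∈ C)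
  (hdual : (negDualNZ C).Nonempty)
  (f : X → Set Z) (hG : ∀ x, IsG C (f x)) (hf : ConvexSV f)
  (x₀ : X) (hx₀ : (f x₀).Nonempty) :
    (∀ x : X, ∀ p ∈ negDualNZ C,
      phi f p x₀ = ⊥ ∨ (0:EReal) ≤ phiDer f p x₀ (x - x₀)) ↔ (f x₀ = closure (convexHull ℝ (⋃ x : X, f x))) := by
  obtain ⟨a0, ha0⟩ := hx₀
  have hclosed : IsClosed (f x₀) := by rw [hG x₀]; exact isClosed_closure
  have hconv : Convex ℝ (f x₀) := by
    rw [hG x₀]; exact (convex_convexHull ℝ _).closure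
  have hCsub : f x₀ + C ⊆ f x₀ := by
    conv_rhs => rw [hG x₀]
    exact (subset_convexHull ℝ _).trans subset_closure
  -- phi f p x₀ is never ⊤
  have hnetop : ∀ p : Z →L[ℝ] ℝ, phi f p x₀ ≠ ⊤ := by
    intro p h
    have h2 : phi f p x₀ ≤ ((-(p a0) : ℝ) : EReal) := sInf_le ⟨a0, ha0, rfl⟩
    rw [h] at h2
    exact (EReal.coe_ne_top _) (top_le_iff.mp h2)
  constructor
  · -- forward direction
    intro h
    have key : ∀ x, f x ⊆ f x₀ := by
      intro x z hz
      by_contra hznot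
      obtain ⟨p, u, hlt, hu⟩ := geometric_hahn_banach_closed_point hconv hclosed hznot
      -- p is in the negative dual cone
      have hpC : ∀ c ∈ C, p c ≤ 0 := by
        intro c hc
        by_contra hpc
        push_neg at hpc
        have hua : 0 < u - p a0 := by have := hlt a0 ha0; linarith
        set r : ℝ := (u - p a0 + 1) / (p c) with hr
        have hrpos : 0 < r := div_pos (by linarith) hpc
        have hmem : a0 + r • c ∈ f x₀ := hCsub (Set.add_mem_add ha0 (hCcone c hc r hrpos))
        have := hlt _ hmem
        rw [map_add, map_smul, smul_eq_mul, hr, div_mul_cancel₀ _ (ne_of_gt hpc)] at this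
        linarith
      have hp0 : p ≠ 0 := by
        intro h0
        have h1 := hlt a0 ha0
        rw [h0] at h1 hu
        simp at h1 hu
        linarith
      -- lower bound for phi at x₀
      have hlb : ((-u : ℝ) : EReal) ≤ phi f p x₀ := by
        apply le_sInf
        rintro _ ⟨a, ha, rfl⟩
        exact EReal.coe_le_coe_iff.mpr (by have := hlt a ha; linarith)
      rcases h x p ⟨hpC, hp0⟩ with hbot | hder
      · rw [hbot] at hlb
        exact (EReal.coe_ne_bot _) (le_bot_iff.mp hlb)
      · -- from the derivative condition at t = 1, phi x₀ ≤ phi x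
        have h1 : phiDer f p x₀ (x - x₀) ≤
            (((1 / (1:ℝ)) : ℝ) : EReal) * eresid (phi f p (x₀ + (1:ℝ) • (x - x₀))) (phi f p x₀) :=
          iInf₂_le (1:ℝ) (mem_Ioi.mpr one_pos)
        have hx1 : x₀ + (1:ℝ) • (x - x₀) = x := by rw [one_smul]; abel
        rw [hx1] at h1
        norm_num at h1
        have hres : (0:EReal) ≤ eresid (phi f p x) (phi f p x₀) := le_trans hder h1
        have hnb : phi f p x₀ ≠ ⊥ := by
          intro hb; rw [hb] at hlb; exact (EReal.coe_ne_bot _) (le_bot_iff.mp hlb)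
        have hcoe : ((phi f p x₀).toReal : EReal) = phi f p x₀ :=
          EReal.coe_toReal (hnetop p) hnb
        rw [← hcoe] at hres
        have hle : phi f p x₀ ≤ phi f p x := hcoe ▸ le_of_eresid_nonneg hres
        have hub : phi f p x ≤ ((-(p z) : ℝ) : EReal) := sInf_le ⟨z, hz, rfl⟩
        have : ((-u : ℝ) : EReal) ≤ ((-(p z) : ℝ) : EReal) :=
          le_trans hlb (le_trans hle hub)
        rw [EReal.coe_le_coe_iff] at this
        linarith
    apply subset_antisymm
    · exact (subset_iUnion f x₀).trans ((subset_convexHull ℝ _).trans subset_closure)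
    · exact closure_minimal (convexHull_min (iUnion_subset key) hconv) hclosed
  · -- reverse direction
    intro heq x p hp
    by_cases hb : phi f p x₀ = ⊥
    · exact Or.inl hb
    · right
      have hsub : ∀ y, f y ⊆ f x₀ := by
        intro y
        rw [heq]
        exact (subset_iUnion f y).trans ((subset_convexHull ℝ _).trans subset_closure)
      have hmono : ∀ y, phi f p x₀ ≤ phi f p y := fun y =>
        sInf_le_sInf (image_mono (f := fun z => ((-(p z) : ℝ) : EReal)) (hsub y))
      apply le_iInf₂
      intro t ht
      have hcoe : ((phi f p x₀).toReal : EReal) = phi f p x₀ :=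
        EReal.coe_toReal (hnetop p) hb
      have hres : (0:EReal) ≤ eresid (phi f p (x₀ + t • (x - x₀))) (phi f p x₀) := by
        rw [← hcoe]
        exact eresid_nonneg_of_le (by rw [hcoe]; exact hmono _)
      have htpos : (0:ℝ) < 1 / t := by
        rw [mem_Ioi] at ht; positivity
      set e := eresid (phi f p (x₀ + t • (x - x₀))) (phi f p x₀) with he
      rcases eq_top_or_lt_top e with hetop | helt
      · rw [hetop, EReal.mul_top_of_pos (by exact_mod_cast htpos)]
        exact le_top
      · have hneb : e ≠ ⊥ := by
          intro hbb
          rw [hbb] at hres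
          exact absurd (le_bot_iff.mp hres) (by simp)
        have hce : ((e.toReal : ℝ) : EReal) = e := EReal.coe_toReal helt.ne hneb
        have h0 : (0:ℝ) ≤ e.toReal := by
          rw [← EReal.coe_le_coe_iff, hce]
          exact_mod_cast hres
        rw [← hce, ← EReal.coe_mul]
        exact EReal.coe_nonneg.mpr (mul_nonneg htpos.le h0)
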